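/- arXiv:2109.08554 — 4 statements merged into one kernel-verified Lean document; each statement's English description precedes it below -/
import Mathlib

section
/- The derivative of the Riemann zeta function at −2 satisfies ζ′(−2) = −ζ(3)/(4π²); equivalently, −28 ζ′(−2) = 7ζ(3)/π². -/
open Complex

/-- `ζ′(−2) = −ζ(3)/(4π²)`; equivalently `−28 ζ′(−2) = 7ζ(3)/π²`. -/
theorem zeta_deriv_neg_two :
    deriv riemannZeta (-2) = -riemannZeta 3 / (4 * (Real.pi : ℂ) ^ 2) ∧
    -28 * deriv riemannZeta (-2) = 7 * riemannZeta 3 / (Real.pi : ℂ) ^ 2 := by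
  have hπ : (Real.pi : ℂ) ≠ 0 := by exact_mod_cast Real.pi_ne_zero
  have h2π : (2 * (Real.pi : ℂ)) ≠ 0 := by
    simp [hπ]
  -- derivative of s ↦ ζ(1 - s) at 3
  have hζd : DifferentiableAt ℂ riemannZeta (-2) :=
    differentiableAt_riemannZeta (by norm_num)
  have hsub : HasDerivAt (fun s : ℂ => 1 - s) (-1) 3 := by
    simpa using (hasDerivAt_id (3 : ℂ)).const_sub 1
  have hg : HasDerivAt (fun s : ℂ => riemannZeta (1 - s))
      (deriv riemannZeta (-2) * (-1)) 3 := by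
    have h13 : (1 : ℂ) - 3 = -2 := by norm_num
    have hz : HasDerivAt riemannZeta (deriv riemannZeta (-2)) ((1:ℂ) - 3) := by
      rw [h13]; exact hζd.hasDerivAt
    exact hz.comp 3 hsub
  -- eventual equality with the RHS of the functional equation
  have hev : (fun s : ℂ => riemannZeta (1 - s)) =ᶠ[nhds 3]
      fun s => 2 * (2 * (Real.pi : ℂ)) ^ (-s) * Complex.Gamma s *
        Complex.cos ((Real.pi : ℂ) * s / 2) * riemannZeta s := by
    have hmem : {s : ℂ | 2 < s.re} ∈ nhds (3 : ℂ) := by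
      refine (isOpen_lt continuous_const Complex.continuous_re).mem_nhds ?_
      norm_num
    filter_upwards [hmem] with s hs
    refine riemannZeta_one_sub (fun n => ?_) (fun h => ?_)
    · intro h
      rw [h] at hs
      simp only [Set.mem_setOf_eq, Complex.neg_re, Complex.natCast_re] at hs
      have : (0:ℝ) ≤ (n:ℝ) := n.cast_nonneg
      linarith
    · rw [h] at hs
      norm_num at hs
  -- derivative of the RHS at 3
  have hA : HasDerivAt (fun s : ℂ => (2 * (Real.pi : ℂ)) ^ (-s))
      ((2 * (Real.pi : ℂ)) ^ (-(3:ℂ)) * Complex.log (2 * (Real.pi : ℂ)) * (-1)) 3 := by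
    exact (hasDerivAt_neg (3:ℂ)).const_cpow (Or.inl h2π)
  have hB : HasDerivAt Complex.Gamma (deriv Complex.Gamma 3) 3 := by
    refine (Complex.differentiableAt_Gamma _ fun m => ?_).hasDerivAt
    intro h
    have : (0:ℝ) < (3:ℂ).re := by norm_num
    rw [h] at this
    simp only [Complex.neg_re, Complex.natCast_re] at this
    have : (0:ℝ) ≤ (m:ℝ) := m.cast_nonneg
    linarith
  have hC : HasDerivAt (fun s : ℂ => Complex.cos ((Real.pi : ℂ) * s / 2))
      (-Complex.sin ((Real.pi : ℂ) * 3 / 2) * ((Real.pi : ℂ) / 2)) 3 := by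
    have h1 : HasDerivAt (fun s : ℂ => (Real.pi : ℂ) * s / 2) ((Real.pi : ℂ) / 2) 3 := by
      simpa using ((hasDerivAt_id (3:ℂ)).const_mul (Real.pi : ℂ)).div_const 2
    exact (Complex.hasDerivAt_cos _).comp 3 h1
  have hD : HasDerivAt riemannZeta (deriv riemannZeta 3) 3 :=
    (differentiableAt_riemannZeta (by norm_num)).hasDerivAt
  have hf := (((hA.const_mul 2).mul hB).mul hC).mul hD
  -- special values
  have hcos : Complex.cos ((Real.pi : ℂ) * 3 / 2) = 0 := by
    rw [show (Real.pi : ℂ) * 3 / 2 = ((Real.pi * 3 / 2 : ℝ) : ℂ) by push_cast; ring,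
      ← Complex.ofReal_cos,
      show Real.pi * 3 / 2 = Real.pi + Real.pi / 2 by ring,
      Real.cos_add, Real.cos_pi_div_two, Real.sin_pi]
    norm_num
  have hsin : Complex.sin ((Real.pi : ℂ) * 3 / 2) = -1 := by
    rw [show (Real.pi : ℂ) * 3 / 2 = ((Real.pi * 3 / 2 : ℝ) : ℂ) by push_cast; ring,
      ← Complex.ofReal_sin,
      show Real.pi * 3 / 2 = Real.pi + Real.pi / 2 by ring,
      Real.sin_add, Real.cos_pi_div_two, Real.sin_pi, Real.sin_pi_div_two, Real.cos_pi]
    norm_num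
  have hΓ : Complex.Gamma 3 = 2 := by
    rw [show (3:ℂ) = (2:ℕ) + 1 by norm_num, Complex.Gamma_nat_eq_factorial]
    norm_num
  have hpow : (2 * (Real.pi : ℂ)) ^ (-(3:ℂ)) = 1 / (8 * (Real.pi : ℂ) ^ 3) := by
    rw [show (-(3:ℂ)) = ((-3 : ℤ) : ℂ) by norm_num, Complex.cpow_intCast]
    rw [zpow_neg, show (2 * (Real.pi : ℂ)) ^ (3:ℤ) = 8 * (Real.pi : ℂ) ^ 3 by rw [show (3:ℤ) = ((3:ℕ):ℤ) by norm_num, zpow_natCast]; ring]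
    rw [one_div]
  -- combine
  have key : deriv riemannZeta (-2) * (-1) =
      (2 * ((2 * (Real.pi : ℂ)) ^ (-(3:ℂ)) * Complex.log (2 * (Real.pi : ℂ)) * (-1)) *
          Complex.Gamma 3 + 2 * (2 * (Real.pi : ℂ)) ^ (-(3:ℂ)) * deriv Complex.Gamma 3) *
          Complex.cos ((Real.pi : ℂ) * 3 / 2) * riemannZeta 3 +
        2 * (2 * (Real.pi : ℂ)) ^ (-(3:ℂ)) * Complex.Gamma 3 *
          (-Complex.sin ((Real.pi : ℂ) * 3 / 2) * ((Real.pi : ℂ) / 2)) * riemannZeta 3 +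
        2 * (2 * (Real.pi : ℂ)) ^ (-(3:ℂ)) * Complex.Gamma 3 *
          Complex.cos ((Real.pi : ℂ) * 3 / 2) * deriv riemannZeta 3 := by
    have e1 := hg.deriv
    have e2 := hev.deriv_eq
    have e3 := hf.deriv
    rw [e1] at e2
    rw [e2, show (fun s : ℂ => 2 * (2 * (Real.pi : ℂ)) ^ (-s) * Complex.Gamma s * Complex.cos ((Real.pi : ℂ) * s / 2) * riemannZeta s) = ((fun y : ℂ => 2 * (2 * (Real.pi : ℂ)) ^ (-y)) * Complex.Gamma * fun s => Complex.cos ((Real.pi : ℂ) * s / 2)) * riemannZeta from rfl, e3]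
    simp only [Pi.mul_apply]
    ring
  rw [hcos, hsin, hΓ, hpow] at key
  have h4π : (4 * (Real.pi : ℂ)) ≠ 0 := by simp [hπ]
  have h4π2 : (4 * (Real.pi : ℂ) ^ 2) ≠ 0 := by simp [hπ]
  have hval : deriv riemannZeta (-2) = -riemannZeta 3 / (4 * (Real.pi : ℂ) ^ 2) := by
    have h := key
    field_simp at h
    rw [eq_div_iff h4π2]
    refine mul_left_cancel₀ h4π ?_
    linear_combination (-2) * h
  refine ⟨hval, ?_⟩
  rw [hval]
  field_simp
  ring
end

section
/- For every real number z with |z| < 1, one has ∫₀¹ √t / √((1 − t²)(1 − z t)) dt = √2 · ( ∫₀¹ du / ((1 − u²/2) · √((1 − u²)(1 − (1+z)u²/2))) − ∫₀¹ du / √((1 − u²)(1 − (1+z)u²/2)) ). -/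
open Real MeasureTheory Set

lemma phi_image : (fun u : ℝ => (1 - u^2)/(1 + u^2)) '' Set.Ioo 0 1 = Set.Ioo 0 1 := by
  ext t
  constructor
  · rintro ⟨u, ⟨hu0, hu1⟩, rfl⟩
    have hP : 0 < 1 + u^2 := by positivity
    constructor
    · exact div_pos (by nlinarith) hP
    · rw [div_lt_one hP]; nlinarith
  · rintro ⟨ht0, ht1⟩
    have hd : (0:ℝ) < (1-t)/(1+t) := div_pos (by linarith) (by linarith)
    refine ⟨Real.sqrt ((1-t)/(1+t)), ⟨Real.sqrt_pos.mpr hd, ?_⟩, ?_⟩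
    · refine (Real.sqrt_lt' one_pos).mpr ?_
      rw [one_pow, div_lt_one (by linarith)]; nlinarith
    · have hu2 : Real.sqrt ((1-t)/(1+t)) ^ 2 = (1-t)/(1+t) := Real.sq_sqrt hd.le
      simp only [hu2]
      field_simp
      ring

lemma phi_inj : Set.InjOn (fun u : ℝ => (1 - u^2)/(1 + u^2)) (Set.Ioo 0 1) := by
  rintro a ⟨ha0, ha1⟩ b ⟨hb0, hb1⟩ h
  simp only at h
  rw [div_eq_div_iff (by positivity) (by positivity)] at h
  nlinarith

lemma phi_deriv (u : ℝ) : HasDerivAt (fun u : ℝ => (1 - u^2)/(1 + u^2))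
    (-(4*u)/(1+u^2)^2) u := by
  have h1 : HasDerivAt (fun u : ℝ => 1 - u^2) (-(2*u)) u := by
    simpa using ((hasDerivAt_pow 2 u).const_sub 1)
  have h2 : HasDerivAt (fun u : ℝ => 1 + u^2) (2*u) u := by
    simpa using ((hasDerivAt_pow 2 u).const_add 1)
  have := h1.div h2 (by positivity)
  refine this.congr_deriv ?_
  ring

lemma psi_image : (fun v : ℝ => Real.sqrt (1 - v^2)) '' Set.Ioo 0 1 = Set.Ioo 0 1 := by
  ext u
  constructor
  · rintro ⟨v, ⟨hv0, hv1⟩, rfl⟩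
    have h1 : (0:ℝ) < 1 - v^2 := by nlinarith
    constructor
    · exact Real.sqrt_pos.mpr h1
    · exact (Real.sqrt_lt' one_pos).mpr (by nlinarith)
  · rintro ⟨hu0, hu1⟩
    have h1 : (0:ℝ) < 1 - u^2 := by nlinarith
    refine ⟨Real.sqrt (1 - u^2), ⟨Real.sqrt_pos.mpr h1, ?_⟩, ?_⟩
    · exact (Real.sqrt_lt' one_pos).mpr (by nlinarith)
    · simp only
      rw [Real.sq_sqrt h1.le]
      simp only [sub_sub_cancel]
      exact Real.sqrt_sq hu0.le

lemma psi_inj : Set.InjOn (fun v : ℝ => Real.sqrt (1 - v^2)) (Set.Ioo 0 1) := by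
  rintro a ⟨ha0, ha1⟩ b ⟨hb0, hb1⟩ h
  simp only at h
  have h2 : 1 - a^2 = 1 - b^2 := by
    have := congrArg (fun x => x^2) h
    simpa [Real.sq_sqrt (by nlinarith : (0:ℝ) ≤ 1 - a^2),
      Real.sq_sqrt (by nlinarith : (0:ℝ) ≤ 1 - b^2)] using this
  nlinarith

lemma psi_deriv (v : ℝ) (hv : v ∈ Set.Ioo (0:ℝ) 1) :
    HasDerivAt (fun v : ℝ => Real.sqrt (1 - v^2)) (-v / Real.sqrt (1 - v^2)) v := by
  obtain ⟨hv0, hv1⟩ := hv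
  have h1 : (0:ℝ) < 1 - v^2 := by nlinarith
  have h2 : HasDerivAt (fun v : ℝ => 1 - v^2) (-(2*v)) v := by
    simpa using ((hasDerivAt_pow 2 v).const_sub 1)
  have h3 := (Real.hasDerivAt_sqrt h1.ne').comp v h2
  refine h3.congr_deriv ?_
  have : Real.sqrt (1 - v^2) ≠ 0 := by positivity
  field_simp

lemma eqL (z u : ℝ) (hz : |z| < 1) (hu : u ∈ Set.Ioo (0:ℝ) 1) :
    |(-(4*u))/(1+u^2)^2| * (Real.sqrt ((1-u^2)/(1+u^2)) /
      Real.sqrt ((1 - ((1-u^2)/(1+u^2))^2) * (1 - z*((1-u^2)/(1+u^2))))) =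
    2 * Real.sqrt (1-u^2) / ((1+u^2) * Real.sqrt (1-z+(1+z)*u^2)) := by
  obtain ⟨hu0, hu1⟩ := hu
  obtain ⟨hz1, hz2⟩ := abs_lt.mp hz
  have hP : (0:ℝ) < 1 + u^2 := by positivity
  have hQ : (0:ℝ) < 1 - u^2 := by nlinarith
  have hW : (0:ℝ) < 1 - z + (1+z)*u^2 := by nlinarith
  have h1 : 1 - ((1-u^2)/(1+u^2))^2 = (2*u/(1+u^2))^2 := by field_simp; ring
  have h2 : 1 - z*((1-u^2)/(1+u^2)) = (1-z+(1+z)*u^2)/(1+u^2) := by field_simp; ring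
  rw [h1, h2, Real.sqrt_mul (by positivity), Real.sqrt_sq (by positivity),
      Real.sqrt_div hQ.le, Real.sqrt_div hW.le, abs_div, abs_neg]
  rw [abs_of_pos (by positivity : (0:ℝ) < 4*u), abs_of_pos (by positivity : (0:ℝ) < (1+u^2)^2)]
  have hsP : Real.sqrt (1+u^2) ≠ 0 := by positivity
  have hsW : Real.sqrt (1-z+(1+z)*u^2) ≠ 0 := by positivity
  have hsQ : Real.sqrt (1-u^2) ≠ 0 := by positivity
  have hPP : Real.sqrt (1+u^2) * Real.sqrt (1+u^2) = 1+u^2 := Real.mul_self_sqrt hP.le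
  field_simp
  ring

lemma eqA (z v : ℝ) (hz : |z| < 1) (hv : v ∈ Set.Ioo (0:ℝ) 1) :
    |(-v / Real.sqrt (1-v^2))| * (1 / ((1 - Real.sqrt (1-v^2)^2/2) *
      Real.sqrt ((1 - Real.sqrt (1-v^2)^2) * (1 - (1+z) * Real.sqrt (1-v^2)^2 / 2)))) =
    2 * Real.sqrt 2 / ((1+v^2) * Real.sqrt (1-v^2) * Real.sqrt (1-z+(1+z)*v^2)) := by
  obtain ⟨hv0, hv1⟩ := hv
  obtain ⟨hz1, hz2⟩ := abs_lt.mp hz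
  have hQ : (0:ℝ) < 1 - v^2 := by nlinarith
  have hW : (0:ℝ) < 1 - z + (1+z)*v^2 := by nlinarith
  rw [Real.sq_sqrt hQ.le]
  have h1 : 1 - (1 - v^2)/2 = (1+v^2)/2 := by ring
  have h2 : 1 - (1-v^2) = v^2 := by ring
  have h3 : 1 - (1+z)*(1-v^2)/2 = (1-z+(1+z)*v^2)/2 := by ring
  rw [h1, h2, h3, Real.sqrt_mul (by positivity), Real.sqrt_sq hv0.le,
      Real.sqrt_div hW.le, abs_div, abs_neg, abs_of_pos hv0,
      abs_of_pos (Real.sqrt_pos.mpr hQ)]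
  have hsQ : Real.sqrt (1-v^2) ≠ 0 := by positivity
  have hsW : Real.sqrt (1-z+(1+z)*v^2) ≠ 0 := by positivity
  have hs2 : Real.sqrt 2 ≠ 0 := by positivity
  have h22 : Real.sqrt 2 * Real.sqrt 2 = 2 := Real.mul_self_sqrt (by norm_num)
  field_simp

lemma eqB (z v : ℝ) (hz : |z| < 1) (hv : v ∈ Set.Ioo (0:ℝ) 1) :
    |(-v / Real.sqrt (1-v^2))| * (1 /
      Real.sqrt ((1 - Real.sqrt (1-v^2)^2) * (1 - (1+z) * Real.sqrt (1-v^2)^2 / 2))) =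
    Real.sqrt 2 / (Real.sqrt (1-v^2) * Real.sqrt (1-z+(1+z)*v^2)) := by
  obtain ⟨hv0, hv1⟩ := hv
  obtain ⟨hz1, hz2⟩ := abs_lt.mp hz
  have hQ : (0:ℝ) < 1 - v^2 := by nlinarith
  have hW : (0:ℝ) < 1 - z + (1+z)*v^2 := by nlinarith
  rw [Real.sq_sqrt hQ.le]
  have h2 : 1 - (1-v^2) = v^2 := by ring
  have h3 : 1 - (1+z)*(1-v^2)/2 = (1-z+(1+z)*v^2)/2 := by ring
  rw [h2, h3, Real.sqrt_mul (by positivity), Real.sqrt_sq hv0.le,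
      Real.sqrt_div hW.le, abs_div, abs_neg, abs_of_pos hv0,
      abs_of_pos (Real.sqrt_pos.mpr hQ)]
  have hsQ : Real.sqrt (1-v^2) ≠ 0 := by positivity
  have hsW : Real.sqrt (1-z+(1+z)*v^2) ≠ 0 := by positivity
  have hs2 : Real.sqrt 2 ≠ 0 := by positivity
  have h22 : Real.sqrt 2 * Real.sqrt 2 = 2 := Real.mul_self_sqrt (by norm_num)
  field_simp

lemma eqG (z v : ℝ) (hz : |z| < 1) (hv : v ∈ Set.Ioo (0:ℝ) 1) :
    Real.sqrt 2 * (2 * Real.sqrt 2 / ((1+v^2) * Real.sqrt (1-v^2) * Real.sqrt (1-z+(1+z)*v^2))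
      - Real.sqrt 2 / (Real.sqrt (1-v^2) * Real.sqrt (1-z+(1+z)*v^2))) =
    2 * Real.sqrt (1-v^2) / ((1+v^2) * Real.sqrt (1-z+(1+z)*v^2)) := by
  obtain ⟨hv0, hv1⟩ := hv
  obtain ⟨hz1, hz2⟩ := abs_lt.mp hz
  have hQ : (0:ℝ) < 1 - v^2 := by nlinarith
  have hW : (0:ℝ) < 1 - z + (1+z)*v^2 := by nlinarith
  have hP : (0:ℝ) < 1 + v^2 := by positivity
  have hsQ : Real.sqrt (1-v^2) ≠ 0 := by positivity
  have hsW : Real.sqrt (1-z+(1+z)*v^2) ≠ 0 := by positivity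
  have h22 : Real.sqrt 2 * Real.sqrt 2 = 2 := Real.mul_self_sqrt (by norm_num)
  have hQQ : Real.sqrt (1-v^2) * Real.sqrt (1-v^2) = 1-v^2 := Real.mul_self_sqrt hQ.le
  set q := Real.sqrt (1-v^2) with hq
  set w := Real.sqrt (1-z+(1+z)*v^2) with hw
  set s := Real.sqrt 2 with hs
  field_simp
  linear_combination (1-v^2) * h22 - 2 * hQQ

lemma integrable_aux : IntegrableOn (fun v : ℝ => (1-v) ^ (-(1/2) : ℝ)) (Set.Ioo 0 1) := by
  have h0 : IntervalIntegrable (fun x : ℝ => x ^ (-(1/2) : ℝ)) volume 0 1 :=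
    intervalIntegral.intervalIntegrable_rpow' (by norm_num)
  have h1 := (h0.comp_sub_left 1).symm
  norm_num at h1
  rwa [intervalIntegrable_iff_integrableOn_Ioo_of_le (by norm_num)] at h1

lemma rpow_half_eq (v : ℝ) (hv : v < 1) : (1-v) ^ (-(1/2) : ℝ) = (Real.sqrt (1-v))⁻¹ := by
  rw [Real.rpow_neg (by linarith), Real.sqrt_eq_rpow]

lemma key_ineq (z v : ℝ) (hz1 : -1 < z) (hz2 : z < 1) (hv0 : 0 < v) (hv1 : v < 1) :
    Real.sqrt (1-z) * Real.sqrt (1-v) ≤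
      (1+v^2) * Real.sqrt (1-v^2) * Real.sqrt (1-z+(1+z)*v^2) := by
  have e1 : Real.sqrt (1-v) ≤ Real.sqrt (1-v^2) := Real.sqrt_le_sqrt (by nlinarith)
  have e2 : Real.sqrt (1-z) ≤ Real.sqrt (1-z+(1+z)*v^2) := Real.sqrt_le_sqrt (by nlinarith)
  have e3 : Real.sqrt (1-z) * Real.sqrt (1-v) ≤
      Real.sqrt (1-z+(1+z)*v^2) * Real.sqrt (1-v^2) :=
    mul_le_mul e2 e1 (Real.sqrt_nonneg _) (Real.sqrt_nonneg _)
  nlinarith [Real.sqrt_nonneg (1-v^2), Real.sqrt_nonneg (1-z+(1+z)*v^2), sq_nonneg v,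
    mul_nonneg (Real.sqrt_nonneg (1-z+(1+z)*v^2)) (Real.sqrt_nonneg (1-v^2))]

lemma intA (z : ℝ) (hz : |z| < 1) :
    IntegrableOn (fun v : ℝ =>
      2 * Real.sqrt 2 / ((1+v^2) * Real.sqrt (1-v^2) * Real.sqrt (1-z+(1+z)*v^2)))
      (Set.Ioo 0 1) := by
  obtain ⟨hz1, hz2⟩ := abs_lt.mp hz
  have hzp : (0:ℝ) < 1 - z := by linarith
  apply Integrable.mono' (integrable_aux.const_mul (2 * Real.sqrt 2 / Real.sqrt (1-z)))
  · exact (Measurable.aestronglyMeasurable (by fun_prop))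
  · rw [ae_restrict_iff' measurableSet_Ioo]
    refine ae_of_all _ fun v hv => ?_
    obtain ⟨hv0, hv1⟩ := hv
    have hQ : (0:ℝ) < 1 - v^2 := by nlinarith
    have hW : (0:ℝ) < 1 - z + (1+z)*v^2 := by nlinarith
    have h1v : (0:ℝ) < 1 - v := by linarith
    rw [Real.norm_eq_abs, abs_of_nonneg (by positivity), rpow_half_eq v hv1]
    have key := key_ineq z v hz1 hz2 hv0 hv1
    have hd : (0:ℝ) < Real.sqrt (1-z) * Real.sqrt (1-v) := by positivity
    calc 2 * Real.sqrt 2 / ((1+v^2) * Real.sqrt (1-v^2) * Real.sqrt (1-z+(1+z)*v^2))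
        ≤ 2 * Real.sqrt 2 / (Real.sqrt (1-z) * Real.sqrt (1-v)) := by
          gcongr
        _ = 2 * Real.sqrt 2 / Real.sqrt (1-z) * (Real.sqrt (1-v))⁻¹ := by
          field_simp

lemma intB (z : ℝ) (hz : |z| < 1) :
    IntegrableOn (fun v : ℝ =>
      Real.sqrt 2 / (Real.sqrt (1-v^2) * Real.sqrt (1-z+(1+z)*v^2)))
      (Set.Ioo 0 1) := by
  obtain ⟨hz1, hz2⟩ := abs_lt.mp hz
  have hzp : (0:ℝ) < 1 - z := by linarith
  apply Integrable.mono' (integrable_aux.const_mul (Real.sqrt 2 / Real.sqrt (1-z)))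
  · exact (Measurable.aestronglyMeasurable (by fun_prop))
  · rw [ae_restrict_iff' measurableSet_Ioo]
    refine ae_of_all _ fun v hv => ?_
    obtain ⟨hv0, hv1⟩ := hv
    have hQ : (0:ℝ) < 1 - v^2 := by nlinarith
    have hW : (0:ℝ) < 1 - z + (1+z)*v^2 := by nlinarith
    have h1v : (0:ℝ) < 1 - v := by linarith
    rw [Real.norm_eq_abs, abs_of_nonneg (by positivity), rpow_half_eq v hv1]
    have e1 : Real.sqrt (1-v) ≤ Real.sqrt (1-v^2) := Real.sqrt_le_sqrt (by nlinarith)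
    have e2 : Real.sqrt (1-z) ≤ Real.sqrt (1-z+(1+z)*v^2) := Real.sqrt_le_sqrt (by nlinarith)
    have key : Real.sqrt (1-z) * Real.sqrt (1-v) ≤
        Real.sqrt (1-v^2) * Real.sqrt (1-z+(1+z)*v^2) := by
      calc Real.sqrt (1-z) * Real.sqrt (1-v)
          ≤ Real.sqrt (1-z+(1+z)*v^2) * Real.sqrt (1-v^2) :=
            mul_le_mul e2 e1 (Real.sqrt_nonneg _) (Real.sqrt_nonneg _)
        _ = Real.sqrt (1-v^2) * Real.sqrt (1-z+(1+z)*v^2) := mul_comm _ _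
    have hd : (0:ℝ) < Real.sqrt (1-z) * Real.sqrt (1-v) := by positivity
    calc Real.sqrt 2 / (Real.sqrt (1-v^2) * Real.sqrt (1-z+(1+z)*v^2))
        ≤ Real.sqrt 2 / (Real.sqrt (1-z) * Real.sqrt (1-v)) := by
          gcongr
        _ = Real.sqrt 2 / Real.sqrt (1-z) * (Real.sqrt (1-v))⁻¹ := by
          field_simp

open Real intervalIntegral

/-- For `|z| < 1`, the substitution `t = 1 − u²` gives
`∫₀¹ √t/√((1−t²)(1−zt)) dt
  = √2 (∫₀¹ du/((1−u²/2)√((1−u²)(1−(1+z)u²/2))) − ∫₀¹ du/√((1−u²)(1−(1+z)u²/2)))`. -/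
theorem integral_substitution (z : ℝ) (hz : |z| < 1) :
    ∫ t in (0:ℝ)..1, Real.sqrt t / Real.sqrt ((1 - t ^ 2) * (1 - z * t)) =
      Real.sqrt 2 *
        ((∫ u in (0:ℝ)..1,
            1 / ((1 - u ^ 2 / 2) * Real.sqrt ((1 - u ^ 2) * (1 - (1 + z) * u ^ 2 / 2)))) -
         ∫ u in (0:ℝ)..1, 1 / Real.sqrt ((1 - u ^ 2) * (1 - (1 + z) * u ^ 2 / 2))) := by
  have hL : (∫ t in (0:ℝ)..1, Real.sqrt t / Real.sqrt ((1 - t ^ 2) * (1 - z * t)))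
      = ∫ v in Set.Ioo (0:ℝ) 1,
          2 * Real.sqrt (1-v^2) / ((1+v^2) * Real.sqrt (1-z+(1+z)*v^2)) := by
    rw [intervalIntegral.integral_of_le (by norm_num),
      MeasureTheory.integral_Ioc_eq_integral_Ioo]
    conv_lhs => rw [← phi_image]
    rw [MeasureTheory.integral_image_eq_integral_abs_deriv_smul measurableSet_Ioo
        (fun x _ => (phi_deriv x).hasDerivWithinAt) phi_inj]
    refine MeasureTheory.setIntegral_congr_fun measurableSet_Ioo fun u hu => ?_
    simpa only [smul_eq_mul] using eqL z u hz hu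
  have hA : (∫ u in (0:ℝ)..1,
        1 / ((1 - u ^ 2 / 2) * Real.sqrt ((1 - u ^ 2) * (1 - (1 + z) * u ^ 2 / 2))))
      = ∫ v in Set.Ioo (0:ℝ) 1,
          2 * Real.sqrt 2 / ((1+v^2) * Real.sqrt (1-v^2) * Real.sqrt (1-z+(1+z)*v^2)) := by
    rw [intervalIntegral.integral_of_le (by norm_num),
      MeasureTheory.integral_Ioc_eq_integral_Ioo]
    conv_lhs => rw [← psi_image]
    rw [MeasureTheory.integral_image_eq_integral_abs_deriv_smul measurableSet_Ioo
        (fun x hx => (psi_deriv x hx).hasDerivWithinAt) psi_inj]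
    refine MeasureTheory.setIntegral_congr_fun measurableSet_Ioo fun v hv => ?_
    simpa only [smul_eq_mul] using eqA z v hz hv
  have hB : (∫ u in (0:ℝ)..1, 1 / Real.sqrt ((1 - u ^ 2) * (1 - (1 + z) * u ^ 2 / 2)))
      = ∫ v in Set.Ioo (0:ℝ) 1,
          Real.sqrt 2 / (Real.sqrt (1-v^2) * Real.sqrt (1-z+(1+z)*v^2)) := by
    rw [intervalIntegral.integral_of_le (by norm_num),
      MeasureTheory.integral_Ioc_eq_integral_Ioo]
    conv_lhs => rw [← psi_image]
    rw [MeasureTheory.integral_image_eq_integral_abs_deriv_smul measurableSet_Ioo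
        (fun x hx => (psi_deriv x hx).hasDerivWithinAt) psi_inj]
    refine MeasureTheory.setIntegral_congr_fun measurableSet_Ioo fun v hv => ?_
    simpa only [smul_eq_mul] using eqB z v hz hv
  rw [hL, hA, hB, ← MeasureTheory.integral_sub (intA z hz) (intB z hz),
    ← MeasureTheory.integral_const_mul]
  exact (MeasureTheory.setIntegral_congr_fun measurableSet_Ioo
    fun v hv => (eqG z v hz hv)).symm
end

section
/- The identity ∫₀¹ du / ((1 − u²/2) · √((1 − u²)(1 − 3u²/4))) = (3/2) · ∫₀¹ du / √((1 − u²)(1 − 3u²/4)) holds. -/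
open Real intervalIntegral

namespace EllipticAux

open MeasureTheory Set

noncomputable def S (u : ℝ) : ℝ := Real.sqrt ((1 - u ^ 2) * (1 - 3 * u ^ 2 / 4))

noncomputable def V (u : ℝ) : ℝ := Real.sqrt ((1 - u ^ 2) / (1 - 3 * u ^ 2 / 4))

lemma hb_pos {u : ℝ} (hu : u ∈ Ioo (0:ℝ) 1) : 0 < 1 - 3 * u ^ 2 / 4 := by
  obtain ⟨h0, h1⟩ := hu; nlinarith

lemma ha_pos {u : ℝ} (hu : u ∈ Ioo (0:ℝ) 1) : 0 < 1 - u ^ 2 := by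
  obtain ⟨h0, h1⟩ := hu; nlinarith

lemma hq_pos {u : ℝ} (hu : u ∈ Ioo (0:ℝ) 1) : 0 < 1 - u ^ 2 / 2 := by
  obtain ⟨h0, h1⟩ := hu; nlinarith

lemma hS_pos {u : ℝ} (hu : u ∈ Ioo (0:ℝ) 1) : 0 < S u :=
  Real.sqrt_pos.2 (mul_pos (ha_pos hu) (hb_pos hu))

lemma hV_sq {u : ℝ} (hu : u ∈ Ioo (0:ℝ) 1) :
    (V u) ^ 2 = (1 - u ^ 2) / (1 - 3 * u ^ 2 / 4) :=
  Real.sq_sqrt (le_of_lt (div_pos (ha_pos hu) (hb_pos hu)))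

lemma hv2 {u : ℝ} (hu : u ∈ Ioo (0:ℝ) 1) :
    (V u) ^ 2 * (1 - 3 * u ^ 2 / 4) = 1 - u ^ 2 := by
  rw [hV_sq hu]
  exact div_mul_cancel₀ _ (hb_pos hu).ne'

lemma hV_pos {u : ℝ} (hu : u ∈ Ioo (0:ℝ) 1) : 0 < V u :=
  Real.sqrt_pos.2 (div_pos (ha_pos hu) (hb_pos hu))

lemma hV_mem {u : ℝ} (hu : u ∈ Ioo (0:ℝ) 1) : V u ∈ Ioo (0:ℝ) 1 := by
  refine ⟨hV_pos hu, ?_⟩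
  have h1 : (V u) ^ 2 < 1 := by
    rw [hV_sq hu, div_lt_one (hb_pos hu)]
    obtain ⟨h0, h1⟩ := hu; nlinarith
  nlinarith [hV_pos hu]

lemma hS_eq {u : ℝ} (hu : u ∈ Ioo (0:ℝ) 1) : S u = V u * (1 - 3 * u ^ 2 / 4) := by
  have hb := hb_pos hu
  have h : (1 - u ^ 2) * (1 - 3 * u ^ 2 / 4) = (V u * (1 - 3 * u ^ 2 / 4)) ^ 2 := by
    linear_combination (-(1 - 3 * u ^ 2 / 4)) * hv2 hu
  rw [S, h]
  exact Real.sqrt_sq (mul_nonneg (le_of_lt (hV_pos hu)) hb.le)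

lemma hV_invol {u : ℝ} (hu : u ∈ Ioo (0:ℝ) 1) : V (V u) = u := by
  have hbv := hb_pos (hV_mem hu)
  have h : (1 - (V u) ^ 2) / (1 - 3 * (V u) ^ 2 / 4) = u ^ 2 := by
    rw [div_eq_iff hbv.ne']
    linear_combination (-1 : ℝ) * hv2 hu
  rw [V, h, Real.sqrt_sq (le_of_lt hu.1)]

lemma hV_inj : InjOn V (Ioo (0:ℝ) 1) := fun x hx y hy hxy => by
  rw [← hV_invol hx, ← hV_invol hy, hxy]

lemma hV_image : V '' (Ioo (0:ℝ) 1) = Ioo (0:ℝ) 1 := by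
  apply Subset.antisymm
  · rintro y ⟨x, hx, rfl⟩; exact hV_mem hx
  · intro y hy
    exact ⟨V y, hV_mem hy, hV_invol hy⟩

lemma hV_deriv {u : ℝ} (hu : u ∈ Ioo (0:ℝ) 1) :
    HasDerivAt V (-u / (4 * V u * (1 - 3 * u ^ 2 / 4) ^ 2)) u := by
  have hb := hb_pos hu
  have ha := ha_pos hu
  have hr : HasDerivAt (fun u : ℝ => (1 - u ^ 2) / (1 - 3 * u ^ 2 / 4))
      ((-u / 2) / (1 - 3 * u ^ 2 / 4) ^ 2) u := by
    have h1 : HasDerivAt (fun u : ℝ => 1 - u ^ 2) (-(2 * u)) u := by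
      simpa using ((hasDerivAt_pow 2 u).const_sub 1)
    have h2 : HasDerivAt (fun u : ℝ => 1 - 3 * u ^ 2 / 4) (-(3 * (2 * u) / 4)) u := by
      simpa using ((((hasDerivAt_pow 2 u)).const_mul (3:ℝ)).div_const 4).const_sub 1
    have := h1.div h2 (ne_of_gt hb)
    refine this.congr_deriv ?_
    congr 1
    ring
  have hrne : (1 - u ^ 2) / (1 - 3 * u ^ 2 / 4) ≠ 0 :=
    ne_of_gt (div_pos ha hb)
  have key := (Real.hasDerivAt_sqrt hrne).comp u hr
  have hV : Real.sqrt ((1 - u ^ 2) / (1 - 3 * u ^ 2 / 4)) = V u := rfl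
  refine key.congr_deriv ?_
  symm
  rw [hV, mul_comm (1 / (2 * V u)), div_mul_div_comm]
  have hd1 : (0:ℝ) < 4 * V u * (1 - 3 * u ^ 2 / 4) ^ 2 :=
    mul_pos (mul_pos (by norm_num) (hV_pos hu)) (pow_pos hb 2)
  have hd2 : (0:ℝ) < (1 - 3 * u ^ 2 / 4) ^ 2 * (2 * V u) :=
    mul_pos (pow_pos hb 2) (mul_pos (by norm_num) (hV_pos hu))
  rw [div_eq_div_iff hd1.ne' hd2.ne']
  ring

noncomputable def fI (u : ℝ) : ℝ := 1 / ((1 - u ^ 2 / 2) * S u)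
noncomputable def gI (u : ℝ) : ℝ := 1 / S u
noncomputable def fT (u : ℝ) : ℝ := 2 * (1 - 3 * u ^ 2 / 4) / ((1 - u ^ 2 / 2) * S u)

lemma transform_eq {u : ℝ} (hu : u ∈ Ioo (0:ℝ) 1) :
    |(-u / (4 * V u * (1 - 3 * u ^ 2 / 4) ^ 2))| * fI (V u) = fT u := by
  have hv := hV_mem hu
  have hb := hb_pos hu
  have hq := hq_pos hu
  have hV0 := hV_pos hu
  have hqv := hq_pos hv
  have hbv := hb_pos hv
  have habs : |(-u / (4 * V u * (1 - 3 * u ^ 2 / 4) ^ 2))|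
      = u / (4 * V u * (1 - 3 * u ^ 2 / 4) ^ 2) := by
    rw [abs_div, abs_neg, abs_of_pos hu.1, abs_of_pos (by positivity)]
  have hSv : S (V u) = u * (1 - 3 * (V u) ^ 2 / 4) := by
    have h := hS_eq hv
    rwa [hV_invol hu] at h
  have hr1 : (1 - 3 * (V u) ^ 2 / 4) * (4 * (1 - 3 * u ^ 2 / 4)) = 1 := by
    linear_combination (-3 : ℝ) * hv2 hu
  have hr2 : (1 - (V u) ^ 2 / 2) * (2 * (1 - 3 * u ^ 2 / 4)) = 1 - u ^ 2 / 2 := by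
    linear_combination (-1 : ℝ) * hv2 hu
  rw [habs, fI, fT, hSv, hS_eq hu, div_mul_div_comm]
  have hd1 : (0:ℝ) < 4 * V u * (1 - 3 * u ^ 2 / 4) ^ 2 *
      ((1 - (V u) ^ 2 / 2) * (u * (1 - 3 * (V u) ^ 2 / 4))) :=
    mul_pos (mul_pos (mul_pos (by norm_num) hV0) (pow_pos hb 2))
      (mul_pos hqv (mul_pos hu.1 hbv))
  have hd2 : (0:ℝ) < (1 - u ^ 2 / 2) * (V u * (1 - 3 * u ^ 2 / 4)) :=
    mul_pos hq (mul_pos hV0 hb)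
  rw [div_eq_div_iff hd1.ne' hd2.ne']
  linear_combination
    (-(u * V u * (1 - 3 * u ^ 2 / 4) * ((1 - 3 * (V u) ^ 2 / 4) * (4 * (1 - 3 * u ^ 2 / 4))))) * hr2
    + (-(u * V u * (1 - 3 * u ^ 2 / 4) * (1 - u ^ 2 / 2))) * hr1

lemma sum_eq {u : ℝ} (hu : u ∈ Ioo (0:ℝ) 1) : fI u + fT u = 3 * gI u := by
  have hq := hq_pos hu
  have hS := hS_pos hu
  rw [fI, fT, gI, ← add_div,
    show (1:ℝ) + 2 * (1 - 3 * u ^ 2 / 4) = (1 - u ^ 2 / 2) * 3 by ring,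
    mul_div_mul_left _ _ hq.ne', mul_one_div]

lemma measurable_S : Measurable S :=
  (Real.continuous_sqrt.comp (by continuity)).measurable

lemma measurable_fI : Measurable fI :=
  Measurable.div measurable_const ((Continuous.measurable (by continuity)).mul measurable_S)

lemma measurable_gI : Measurable gI :=
  Measurable.div measurable_const measurable_S

lemma measurable_fT : Measurable fT :=
  Measurable.div (Continuous.measurable (by continuity))
    ((Continuous.measurable (by continuity)).mul measurable_S)

lemma bound_S {u : ℝ} (hu : u ∈ Ioo (0:ℝ) 1) : Real.sqrt (1 - u) / 2 ≤ S u := by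
  have h1u : (0:ℝ) < 1 - u := by linarith [hu.2]
  have heq : Real.sqrt (1 - u) / 2 = Real.sqrt ((1 - u) * (1 / 4)) := by
    rw [Real.sqrt_mul (le_of_lt h1u),
      show ((1:ℝ)/4) = (1/2)^2 by norm_num, Real.sqrt_sq (by norm_num)]
    ring
  rw [heq, S]
  apply Real.sqrt_le_sqrt
  obtain ⟨h0, h1⟩ := hu
  nlinarith [mul_nonneg (sub_nonneg.2 h1.le) h0.le, sq_nonneg u,
    mul_nonneg (mul_nonneg h0.le h0.le) h0.le]

lemma bound_gI {u : ℝ} (hu : u ∈ Ioo (0:ℝ) 1) : 1 / S u ≤ 2 * (1 / Real.sqrt (1 - u)) := by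
  have h1u : (0:ℝ) < 1 - u := by linarith [hu.2]
  calc 1 / S u ≤ 1 / (Real.sqrt (1 - u) / 2) :=
        one_div_le_one_div_of_le (by positivity) (bound_S hu)
    _ = 2 * (1 / Real.sqrt (1 - u)) := by rw [one_div_div]; ring

lemma integrable_of_bound {C : ℝ} (hC : 0 ≤ C) {F : ℝ → ℝ} (hmeas : Measurable F)
    (hbd : ∀ u ∈ Ioo (0:ℝ) 1, 0 ≤ F u ∧ F u ≤ C * (1 / Real.sqrt (1 - u))) :
    IntegrableOn F (Ioo (0:ℝ) 1) volume := by
  have hbase : IntervalIntegrable (fun x : ℝ => x ^ (-(1/2) : ℝ)) volume 0 1 :=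
    intervalIntegrable_rpow' (by norm_num)
  have hcomp : IntervalIntegrable (fun x : ℝ => (1 - x) ^ (-(1/2) : ℝ)) volume 0 1 := by
    have := hbase.comp_sub_left 1
    simpa using this.symm
  have hmaj : IntegrableOn (fun x : ℝ => C * (1 - x) ^ (-(1/2) : ℝ)) (Ioo (0:ℝ) 1) volume :=
    ((intervalIntegrable_iff_integrableOn_Ioo_of_le (by norm_num)).1 hcomp).const_mul C
  apply Integrable.mono hmaj hmeas.aestronglyMeasurable.restrict
  rw [ae_restrict_iff' measurableSet_Ioo]
  filter_upwards with u hu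
  obtain ⟨h0, h1⟩ := hbd u hu
  have h1u : (0:ℝ) < 1 - u := by linarith [hu.2]
  have hrp : (1 - u) ^ (-(1/2) : ℝ) = 1 / Real.sqrt (1 - u) := by
    rw [Real.rpow_neg (le_of_lt h1u), Real.sqrt_eq_rpow]
    norm_num
  rw [Real.norm_eq_abs, Real.norm_eq_abs, abs_of_nonneg h0, hrp,
    abs_of_nonneg (by positivity)]
  exact h1

lemma fI_le {u : ℝ} (hu : u ∈ Ioo (0:ℝ) 1) : fI u ≤ 2 * (1 / S u) := by
  have hq := hq_pos hu
  have hS := hS_pos hu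
  have h : S u / 2 ≤ (1 - u ^ 2 / 2) * S u := by
    have h2 : 0 ≤ S u * (1 - u ^ 2) := mul_nonneg hS.le (ha_pos hu).le
    nlinarith
  calc fI u ≤ 1 / (S u / 2) := one_div_le_one_div_of_le (by positivity) h
    _ = 2 * (1 / S u) := by rw [one_div_div]; ring

lemma integrable_gI : IntegrableOn gI (Ioo (0:ℝ) 1) volume := by
  apply integrable_of_bound (by norm_num : (0:ℝ) ≤ 2) measurable_gI
  intro u hu
  have hS := hS_pos hu
  exact ⟨by rw [gI]; positivity, bound_gI hu⟩

lemma integrable_fI : IntegrableOn fI (Ioo (0:ℝ) 1) volume := by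
  apply integrable_of_bound (by norm_num : (0:ℝ) ≤ 4) measurable_fI
  intro u hu
  have hq := hq_pos hu
  have hS := hS_pos hu
  refine ⟨by rw [fI]; positivity, ?_⟩
  calc fI u ≤ 2 * (1 / S u) := fI_le hu
    _ ≤ 2 * (2 * (1 / Real.sqrt (1 - u))) := by linarith [bound_gI hu]
    _ = 4 * (1 / Real.sqrt (1 - u)) := by ring

lemma integrable_fT : IntegrableOn fT (Ioo (0:ℝ) 1) volume := by
  apply integrable_of_bound (by norm_num : (0:ℝ) ≤ 8) measurable_fT
  intro u hu
  have hq := hq_pos hu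
  have hb := hb_pos hu
  have hS := hS_pos hu
  refine ⟨by rw [fT]; positivity, ?_⟩
  have h1 : fT u ≤ 2 * fI u := by
    rw [fT, fI, mul_one_div]
    exact div_le_div_of_nonneg_right (by nlinarith) (mul_pos hq hS).le
  calc fT u ≤ 2 * fI u := h1
    _ ≤ 2 * (2 * (1 / S u)) := by linarith [fI_le hu]
    _ ≤ 2 * (2 * (2 * (1 / Real.sqrt (1 - u)))) := by linarith [bound_gI hu]
    _ = 8 * (1 / Real.sqrt (1 - u)) := by ring

lemma key_subst :
    ∫ u in Ioo (0:ℝ) 1, fI u = ∫ u in Ioo (0:ℝ) 1, fT u := by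
  have hder : ∀ u ∈ Ioo (0:ℝ) 1,
      HasDerivWithinAt V (-u / (4 * V u * (1 - 3 * u ^ 2 / 4) ^ 2)) (Ioo (0:ℝ) 1) u :=
    fun u hu => (hV_deriv hu).hasDerivWithinAt
  have h := integral_image_eq_integral_abs_deriv_smul measurableSet_Ioo hder hV_inj fI
  rw [hV_image] at h
  rw [h]
  apply setIntegral_congr_fun measurableSet_Ioo
  intro u hu
  simpa [smul_eq_mul] using transform_eq hu

theorem main :
    ∫ u in Ioo (0:ℝ) 1, fI u = (3/2) * ∫ u in Ioo (0:ℝ) 1, gI u := by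
  have hsum : ∫ u in Ioo (0:ℝ) 1, (fI u + fT u) =
      (∫ u in Ioo (0:ℝ) 1, fI u) + ∫ u in Ioo (0:ℝ) 1, fT u :=
    integral_add integrable_fI integrable_fT
  have h3 : ∫ u in Ioo (0:ℝ) 1, (fI u + fT u) = 3 * ∫ u in Ioo (0:ℝ) 1, gI u := by
    rw [← MeasureTheory.integral_const_mul]
    exact setIntegral_congr_fun measurableSet_Ioo fun u hu => sum_eq hu
  linarith [hsum, h3, key_subst]

end EllipticAux

/-- The key elliptic-integral relation:
`∫₀¹ du/((1−u²/2)√((1−u²)(1−3u²/4))) = (3/2) ∫₀¹ du/√((1−u²)(1−3u²/4))`. -/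
theorem elliptic_integral_relation :
    ∫ u in (0:ℝ)..1,
        1 / ((1 - u ^ 2 / 2) * Real.sqrt ((1 - u ^ 2) * (1 - 3 * u ^ 2 / 4))) =
      (3 / 2) * ∫ u in (0:ℝ)..1, 1 / Real.sqrt ((1 - u ^ 2) * (1 - 3 * u ^ 2 / 4)) := by
  have h1 : ∫ u in (0:ℝ)..1,
      1 / ((1 - u ^ 2 / 2) * Real.sqrt ((1 - u ^ 2) * (1 - 3 * u ^ 2 / 4)))
      = ∫ u in Set.Ioo (0:ℝ) 1, EllipticAux.fI u := by
    rw [intervalIntegral.integral_of_le zero_le_one,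
      MeasureTheory.integral_Ioc_eq_integral_Ioo]
    rfl
  have h2 : ∫ u in (0:ℝ)..1, 1 / Real.sqrt ((1 - u ^ 2) * (1 - 3 * u ^ 2 / 4))
      = ∫ u in Set.Ioo (0:ℝ) 1, EllipticAux.gI u := by
    rw [intervalIntegral.integral_of_le zero_le_one,
      MeasureTheory.integral_Ioc_eq_integral_Ioo]
    rfl
  rw [h1, h2, EllipticAux.main]
end

section
/- The identity ∫₀¹ √t / √((1 − t²)(1 − t/2)) dt = (√2 / 2) · ∫₀¹ du / √((1 − u²)(1 − 3u²/4)) du holds. -/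
open Real intervalIntegral Set MeasureTheory

noncomputable def qq (s : ℝ) : ℝ := 1 / Real.sqrt (s * (1 - s) * ((1 + s) * (2 - s)))
noncomputable def PHI (s : ℝ) : ℝ := Real.sqrt (2 * (1 - s) / (2 - s))
noncomputable def PSI (s : ℝ) : ℝ := (-2 / (2 - s) ^ 2) / (2 * Real.sqrt (2 * (1 - s) / (2 - s)))
noncomputable def GG (u : ℝ) : ℝ := 1 / Real.sqrt ((1 - u ^ 2) * (1 - 3 * u ^ 2 / 4))

lemma qq_nonneg (s : ℝ) : 0 ≤ qq s := by unfold qq; positivity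

lemma one_div_sqrt_le {c X k : ℝ} (hc : 0 < c) (hk : 0 < k) (hX : c / k ≤ X) :
    1 / Real.sqrt X ≤ Real.sqrt k * c ^ (-(1/2) : ℝ) := by
  have h1 : Real.sqrt (c / k) ≤ Real.sqrt X := Real.sqrt_le_sqrt hX
  have h2 : 0 < Real.sqrt (c / k) := Real.sqrt_pos.2 (by positivity)
  have h3 : 1 / Real.sqrt X ≤ 1 / Real.sqrt (c / k) := one_div_le_one_div_of_le h2 h1
  have h5 : c ^ (-(1/2) : ℝ) = 1 / Real.sqrt c := by
    rw [Real.rpow_neg hc.le, Real.sqrt_eq_rpow]; norm_num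
  rw [h5, Real.sqrt_div hc.le] at *
  calc 1 / Real.sqrt X ≤ 1 / (Real.sqrt c / Real.sqrt k) := h3
    _ = Real.sqrt k * (1 / Real.sqrt c) := by rw [one_div_div, div_eq_mul_one_div]

lemma qq_measurable : Measurable qq := by
  unfold qq; fun_prop

lemma qq_integrable : IntervalIntegrable qq volume 0 1 := by
  have m1 : AEStronglyMeasurable qq (volume.restrict (uIoc (0:ℝ) (1/2))) :=
    qq_measurable.aestronglyMeasurable
  have m2 : AEStronglyMeasurable qq (volume.restrict (uIoc (1/2:ℝ) 1)) :=
    qq_measurable.aestronglyMeasurable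
  have h1 : IntervalIntegrable qq volume 0 (1/2) := by
    have hg : IntervalIntegrable (fun s : ℝ => Real.sqrt 2 * s ^ (-(1/2) : ℝ)) volume 0 (1/2) :=
      (intervalIntegrable_rpow' (by norm_num)).const_mul _
    refine hg.mono_fun' m1 ?_
    rw [uIoc_of_le (by norm_num : (0:ℝ) ≤ 1/2)]
    refine ae_restrict_of_forall_mem measurableSet_Ioc fun s hs => ?_
    obtain ⟨hs0, hs1⟩ := hs
    simp only [Real.norm_eq_abs, abs_of_nonneg (qq_nonneg s)]
    have hP : (1:ℝ)/2 ≤ (1-s) * ((1+s) * (2-s)) := by nlinarith [sq_nonneg s, mul_nonneg (mul_nonneg hs0.le hs0.le) hs0.le]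
    refine one_div_sqrt_le hs0 (by norm_num) ?_
    nlinarith [mul_le_mul_of_nonneg_left hP hs0.le]
  have h2 : IntervalIntegrable qq volume (1/2) 1 := by
    have hg0 : IntervalIntegrable (fun s : ℝ => s ^ (-(1/2) : ℝ)) volume 0 (1/2) :=
      intervalIntegrable_rpow' (by norm_num)
    have hg : IntervalIntegrable (fun s : ℝ => Real.sqrt 2 * (1 - s) ^ (-(1/2) : ℝ))
        volume (1/2) 1 := by
      have := (hg0.comp_sub_left 1).symm
      norm_num at this
      exact this.const_mul _
    refine hg.mono_fun' m2 ?_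
    rw [uIoc_of_le (by norm_num : (1/2:ℝ) ≤ 1)]
    refine ae_restrict_of_forall_mem measurableSet_Ioc fun s hs => ?_
    obtain ⟨hs0, hs1⟩ := hs
    simp only [Real.norm_eq_abs, abs_of_nonneg (qq_nonneg s)]
    rcases lt_or_eq_of_le hs1 with h | h
    · have hP : (1:ℝ)/2 ≤ s * ((1+s) * (2-s)) := by nlinarith [mul_nonneg (mul_nonneg (by linarith : (0:ℝ) ≤ s) (by linarith : (0:ℝ) ≤ s)) (by linarith : (0:ℝ) ≤ 1 - s)]
      refine one_div_sqrt_le (by linarith) (by norm_num) ?_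
      nlinarith [mul_le_mul_of_nonneg_left hP (by linarith : (0:ℝ) ≤ 1 - s)]
    · subst h
      unfold qq
      norm_num [Real.sqrt_zero]
  exact h1.trans h2

lemma GG_integrable : IntervalIntegrable GG volume 0 1 := by
  have m1 : AEStronglyMeasurable GG (volume.restrict (uIoc (0:ℝ) 1)) := by
    apply Measurable.aestronglyMeasurable; unfold GG; fun_prop
  have hg0 : IntervalIntegrable (fun s : ℝ => s ^ (-(1/2) : ℝ)) volume 0 1 :=
    intervalIntegrable_rpow' (by norm_num)
  have hg : IntervalIntegrable (fun s : ℝ => Real.sqrt 4 * (1 - s) ^ (-(1/2) : ℝ))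
      volume 0 1 := by
    have := (hg0.comp_sub_left 1).symm
    norm_num at this
    exact this.const_mul _
  refine hg.mono_fun' m1 ?_
  rw [uIoc_of_le (by norm_num : (0:ℝ) ≤ 1)]
  refine ae_restrict_of_forall_mem measurableSet_Ioc fun u hu => ?_
  obtain ⟨hu0, hu1⟩ := hu
  have hGGnn : 0 ≤ GG u := by unfold GG; positivity
  simp only [Real.norm_eq_abs, abs_of_nonneg hGGnn]
  rcases lt_or_eq_of_le hu1 with h | h
  · have hP : (1:ℝ)/4 ≤ (1+u) * (1 - 3*u^2/4) := by nlinarith [sq_nonneg u]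
    refine one_div_sqrt_le (by linarith) (by norm_num) ?_
    nlinarith [mul_le_mul_of_nonneg_left hP (by linarith : (0:ℝ) ≤ 1 - u)]
  · subst h
    unfold GG
    norm_num [Real.sqrt_zero]

lemma sqrt_eq' {x y : ℝ} (hy : 0 ≤ y) (h : y ^ 2 = x) : Real.sqrt x = y := by
  rw [← h, Real.sqrt_sq hy]

lemma key1 : ∀ s ∈ Icc (0:ℝ) 1, PSI s * GG (PHI s) = - qq s := by
  intro s hs
  obtain ⟨hs0, hs1⟩ := hs
  rcases eq_or_lt_of_le hs0 with h0 | h0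
  · subst h0
    unfold PSI GG PHI qq
    norm_num
  rcases eq_or_lt_of_le hs1 with h1 | h1
  · subst h1
    unfold PSI GG PHI qq
    norm_num
  -- interior case
  set a := Real.sqrt s with ha_def
  set b := Real.sqrt (1 - s) with hb_def
  set c := Real.sqrt (1 + s) with hc_def
  set d := Real.sqrt (2 - s) with hd_def
  set e := Real.sqrt 2 with he_def
  have ha2 : a ^ 2 = s := Real.sq_sqrt h0.le
  have hb2 : b ^ 2 = 1 - s := Real.sq_sqrt (by linarith)
  have hc2 : c ^ 2 = 1 + s := Real.sq_sqrt (by linarith)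
  have hd2 : d ^ 2 = 2 - s := Real.sq_sqrt (by linarith)
  have he2 : e ^ 2 = 2 := Real.sq_sqrt (by norm_num)
  have ha : 0 < a := Real.sqrt_pos.2 h0
  have hb : 0 < b := Real.sqrt_pos.2 (by linarith)
  have hc : 0 < c := Real.sqrt_pos.2 (by linarith)
  have hd : 0 < d := Real.sqrt_pos.2 (by linarith)
  have he : 0 < e := Real.sqrt_pos.2 (by norm_num)
  have h1' : Real.sqrt (2 * (1 - s) / (2 - s)) = e * b / d :=
    sqrt_eq' (by positivity) (by rw [div_pow, mul_pow, he2, hb2, hd2])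
  have harg : (1 - (e * b / d) ^ 2) * (1 - 3 * (e * b / d) ^ 2 / 4)
      = s * (1 + s) / (2 * (2 - s) ^ 2) := by
    have h2s : (2:ℝ) - s ≠ 0 := by linarith
    rw [div_pow, mul_pow, he2, hb2, hd2]
    field_simp
    ring
  have h2' : Real.sqrt (s * (1 + s) / (2 * (2 - s) ^ 2)) = a * c / (e * d ^ 2) := by
    refine sqrt_eq' (by positivity) ?_
    rw [div_pow, mul_pow, mul_pow, ha2, hc2, he2, show (d ^ 2) ^ 2 = (2 - s) ^ 2 by rw [hd2]]
  have h3' : Real.sqrt (s * (1 - s) * ((1 + s) * (2 - s))) = a * b * (c * d) :=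
    sqrt_eq' (by positivity) (by rw [mul_pow, mul_pow, mul_pow, ha2, hb2, hc2, hd2])
  unfold PSI GG PHI qq
  rw [h1', harg, h2', h3']
  rw [show (2:ℝ) - s = d ^ 2 from hd2.symm]
  field_simp

lemma key2 : ∀ s ∈ Icc (0:ℝ) 1,
    Real.sqrt (1 - s) / Real.sqrt ((1 - (1 - s) ^ 2) * (1 - (1 - s) / 2))
      = Real.sqrt 2 * (1 - s) * qq s := by
  intro s hs
  obtain ⟨hs0, hs1⟩ := hs
  rcases eq_or_lt_of_le hs0 with h0 | h0
  · subst h0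
    unfold qq
    norm_num
  rcases eq_or_lt_of_le hs1 with h1 | h1
  · subst h1
    unfold qq
    norm_num
  set a := Real.sqrt s with ha_def
  set b := Real.sqrt (1 - s) with hb_def
  set c := Real.sqrt (1 + s) with hc_def
  set d := Real.sqrt (2 - s) with hd_def
  set e := Real.sqrt 2 with he_def
  have ha2 : a ^ 2 = s := Real.sq_sqrt h0.le
  have hb2 : b ^ 2 = 1 - s := Real.sq_sqrt (by linarith)
  have hc2 : c ^ 2 = 1 + s := Real.sq_sqrt (by linarith)
  have hd2 : d ^ 2 = 2 - s := Real.sq_sqrt (by linarith)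
  have he2 : e ^ 2 = 2 := Real.sq_sqrt (by norm_num)
  have ha : 0 < a := Real.sqrt_pos.2 h0
  have hb : 0 < b := Real.sqrt_pos.2 (by linarith)
  have hc : 0 < c := Real.sqrt_pos.2 (by linarith)
  have hd : 0 < d := Real.sqrt_pos.2 (by linarith)
  have he : 0 < e := Real.sqrt_pos.2 (by norm_num)
  have harg : (1 - (1 - s) ^ 2) * (1 - (1 - s) / 2) = s * ((1 + s) * (2 - s)) / 2 := by ring
  have h4' : Real.sqrt (s * ((1 + s) * (2 - s)) / 2) = a * (c * d) / e := by
    refine sqrt_eq' (by positivity) ?_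
    rw [div_pow, mul_pow, mul_pow, ha2, hc2, hd2, he2]
  have h3' : Real.sqrt (s * (1 - s) * ((1 + s) * (2 - s))) = a * b * (c * d) :=
    sqrt_eq' (by positivity) (by rw [mul_pow, mul_pow, mul_pow, ha2, hb2, hc2, hd2])
  unfold qq
  rw [harg, h4', h3']
  rw [show (1:ℝ) - s = b ^ 2 from hb2.symm]
  field_simp

lemma PHI_hasDeriv : ∀ x ∈ Ioo (0:ℝ) 1, HasDerivAt PHI (PSI x) x := by
  intro x hx
  obtain ⟨hx0, hx1⟩ := hx
  have h2x : (2:ℝ) - x ≠ 0 := by linarith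
  have hn : HasDerivAt (fun s : ℝ => 2 * (1 - s)) (-2) x := by
    simpa using ((hasDerivAt_const x (1:ℝ)).sub (hasDerivAt_id x)).const_mul 2
  have hd : HasDerivAt (fun s : ℝ => 2 - s) (-1) x := by
    simpa using (hasDerivAt_id x).const_sub (2:ℝ)
  have hw : HasDerivAt (fun s : ℝ => 2 * (1 - s) / (2 - s)) (-2 / (2 - x) ^ 2) x := by
    have := hn.div hd h2x
    refine this.congr_deriv ?_
    congr 1
    ring
  have hwne : 2 * (1 - x) / (2 - x) ≠ 0 :=
    ne_of_gt (div_pos (by linarith) (by linarith))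
  have := (Real.hasDerivAt_sqrt hwne).comp x hw
  refine this.congr_deriv ?_
  unfold PSI
  ring

lemma qq_symm (s : ℝ) : qq (1 - s) = qq s := by
  unfold qq
  rw [show (1-s) * (1-(1-s)) * ((1+(1-s)) * (2-(1-s))) = s * (1-s) * ((1+s) * (2-s)) by ring]

lemma PHI_cont : ContinuousOn PHI (Icc (0:ℝ) 1) := by
  unfold PHI
  apply Real.continuous_sqrt.comp_continuousOn
  apply ContinuousOn.div (by fun_prop) (by fun_prop)
  intro x hx
  have := hx.2
  intro h; linarith [hx.2]

lemma GG_contOn : ContinuousOn GG (Ioo (0:ℝ) 1) := by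
  unfold GG
  apply ContinuousOn.div continuousOn_const
  · exact (Real.continuous_sqrt.comp (by continuity)).continuousOn
  · intro x hx
    obtain ⟨hx0, hx1⟩ := hx
    apply Real.sqrt_ne_zero'.2
    apply mul_pos (by nlinarith) (by nlinarith)

lemma PHI_mem_Ioo : ∀ x ∈ Ioo (0:ℝ) 1, PHI x ∈ Ioo (0:ℝ) 1 := by
  intro x hx
  obtain ⟨hx0, hx1⟩ := hx
  constructor
  · exact Real.sqrt_pos.2 (div_pos (by linarith) (by linarith))
  · rw [show (1:ℝ) = 1^2 by norm_num] at *
    apply (Real.sqrt_lt' (by norm_num)).2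
    rw [div_lt_iff₀ (by linarith)]
    nlinarith

lemma PHI_mem_Icc : ∀ x ∈ Icc (0:ℝ) 1, PHI x ∈ Icc (0:ℝ) 1 := by
  intro x hx
  obtain ⟨hx0, hx1⟩ := hx
  refine ⟨Real.sqrt_nonneg _, ?_⟩
  calc PHI x ≤ Real.sqrt 1 := Real.sqrt_le_sqrt (by rw [div_le_one (by linarith)]; linarith)
    _ = 1 := Real.sqrt_one

/-- `∫₀¹ √t/√((1−t²)(1−t/2)) dt = (√2/2) ∫₀¹ du/√((1−u²)(1−3u²/4))`. -/
theorem integral_z_half :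
    ∫ t in (0:ℝ)..1, Real.sqrt t / Real.sqrt ((1 - t ^ 2) * (1 - t / 2)) =
      (Real.sqrt 2 / 2) * ∫ u in (0:ℝ)..1,
        1 / Real.sqrt ((1 - u ^ 2) * (1 - 3 * u ^ 2 / 4)) := by
  have hle01 : (0:ℝ) ≤ 1 := zero_le_one
  -- substitution u = PHI s in the RHS integral
  have hfc : ContinuousOn PHI (uIcc 0 1) := by rw [uIcc_of_le hle01]; exact PHI_cont
  have hderiv : ∀ x ∈ Ioo (min (0:ℝ) 1) (max (0:ℝ) 1), HasDerivWithinAt PHI (PSI x) (Ioi x) x := by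
    rw [min_eq_left hle01, max_eq_right hle01]
    exact fun x hx => (PHI_hasDeriv x hx).hasDerivWithinAt
  have hgcont : ContinuousOn GG (PHI '' Ioo (min (0:ℝ) 1) (max (0:ℝ) 1)) := by
    rw [min_eq_left hle01, max_eq_right hle01]
    refine GG_contOn.mono ?_
    rintro y ⟨x, hx, rfl⟩
    exact PHI_mem_Ioo x hx
  have hg1 : IntegrableOn GG (PHI '' uIcc (0:ℝ) 1) volume := by
    rw [uIcc_of_le hle01]
    refine ((intervalIntegrable_iff_integrableOn_Icc_of_le hle01).1 GG_integrable).mono_set ?_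
    rintro y ⟨x, hx, rfl⟩
    exact PHI_mem_Icc x hx
  have hg2 : IntegrableOn (fun x => PSI x • (GG ∘ PHI) x) (uIcc (0:ℝ) 1) volume := by
    rw [uIcc_of_le hle01]
    refine IntegrableOn.congr_fun
      (((intervalIntegrable_iff_integrableOn_Icc_of_le hle01).1 qq_integrable).neg)
      ?_ measurableSet_Icc
    intro x hx
    simp only [Function.comp, smul_eq_mul, Pi.neg_apply]
    exact (key1 x hx).symm
  have hsub := integral_comp_smul_deriv''' hfc hderiv hgcont hg1 hg2
  have hPHI0 : PHI 0 = 1 := by unfold PHI; norm_num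
  have hPHI1 : PHI 1 = 0 := by unfold PHI; norm_num
  rw [hPHI0, hPHI1] at hsub
  have hL : (∫ x in (0:ℝ)..1, PSI x • (GG ∘ PHI) x) = ∫ x in (0:ℝ)..1, -qq x := by
    apply integral_congr
    intro x hx
    rw [uIcc_of_le hle01] at hx
    simpa [smul_eq_mul] using key1 x hx
  rw [hL] at hsub
  have hGq : (∫ u in (0:ℝ)..1, 1 / Real.sqrt ((1 - u ^ 2) * (1 - 3 * u ^ 2 / 4)))
      = ∫ x in (0:ℝ)..1, qq x := by
    show (∫ u in (0:ℝ)..1, GG u) = ∫ x in (0:ℝ)..1, qq x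
    rw [integral_symm 0 1 (f := GG)] at hsub
    rw [intervalIntegral.integral_neg] at hsub
    linarith
  -- reflection of the LHS integral
  have hrefl : (∫ t in (0:ℝ)..1, Real.sqrt t / Real.sqrt ((1 - t ^ 2) * (1 - t / 2)))
      = ∫ s in (0:ℝ)..1,
          Real.sqrt (1 - s) / Real.sqrt ((1 - (1 - s) ^ 2) * (1 - (1 - s) / 2)) := by
    have := integral_comp_sub_left (a := 0) (b := 1)
      (fun t => Real.sqrt t / Real.sqrt ((1 - t ^ 2) * (1 - t / 2))) 1
    norm_num at this
    exact this.symm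
  have hstep : (∫ s in (0:ℝ)..1,
        Real.sqrt (1 - s) / Real.sqrt ((1 - (1 - s) ^ 2) * (1 - (1 - s) / 2)))
      = ∫ s in (0:ℝ)..1, (Real.sqrt 2 / 2 * qq s + Real.sqrt 2 * (1 / 2 - s) * qq s) := by
    apply integral_congr
    intro s hs
    rw [uIcc_of_le hle01] at hs
    show Real.sqrt (1 - s) / Real.sqrt ((1 - (1 - s) ^ 2) * (1 - (1 - s) / 2)) = _
    rw [key2 s hs]
    show _ = Real.sqrt 2 / 2 * qq s + Real.sqrt 2 * (1 / 2 - s) * qq s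
    ring
  have hi1 : IntervalIntegrable (fun s => Real.sqrt 2 / 2 * qq s) volume 0 1 :=
    qq_integrable.const_mul _
  have hi2 : IntervalIntegrable (fun s => Real.sqrt 2 * (1 / 2 - s) * qq s) volume 0 1 := by
    refine (qq_integrable.const_mul (Real.sqrt 2)).mono_fun' ?_ ?_
    · exact (((measurable_const.sub measurable_id).const_mul (Real.sqrt 2)).mul
        qq_measurable).aestronglyMeasurable
    · rw [uIoc_of_le hle01]
      refine ae_restrict_of_forall_mem measurableSet_Ioc fun s hs => ?_
      obtain ⟨hs0, hs1⟩ := hs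
      simp only [Real.norm_eq_abs]
      have habs : |1 / 2 - s| ≤ 1 := abs_le.2 ⟨by linarith, by linarith⟩
      have h1 : |Real.sqrt 2 * (1 / 2 - s) * qq s| = Real.sqrt 2 * |1 / 2 - s| * qq s := by
        rw [abs_mul, abs_mul, abs_of_nonneg (Real.sqrt_nonneg 2), abs_of_nonneg (qq_nonneg s)]
      rw [h1]
      nlinarith [mul_le_mul_of_nonneg_right habs (qq_nonneg s), Real.sqrt_nonneg 2,
        qq_nonneg s, mul_le_mul_of_nonneg_left
          (mul_le_mul_of_nonneg_right habs (qq_nonneg s)) (Real.sqrt_nonneg 2)]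
  have hkk0 : (∫ s in (0:ℝ)..1, Real.sqrt 2 * (1 / 2 - s) * qq s) = 0 := by
    have hrefl2 := integral_comp_sub_left (a := 0) (b := 1)
      (fun s => Real.sqrt 2 * (1 / 2 - s) * qq s) 1
    norm_num at hrefl2
    have hs2 : ∀ s : ℝ, Real.sqrt 2 * (1 / 2 - (1 - s)) * qq (1 - s)
        = -(Real.sqrt 2 * (1 / 2 - s) * qq s) := by
      intro s; rw [qq_symm]; ring
    simp_rw [hs2] at hrefl2
    rw [intervalIntegral.integral_neg] at hrefl2
    linarith
  rw [hrefl, hstep, integral_add hi1 hi2, hkk0, add_zero, intervalIntegral.integral_const_mul, hGq]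
end
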